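/- As ε → 0⁺, the entropic regularized OT cost W^ε_C(a,b) converges to the unregularized optimal transport cost W⁰_C(a,b). -/
import Mathlib


open Finset Real Filter

noncomputable def entropy {n m : ℕ} (P : Matrix (Fin n) (Fin m) ℝ) : ℝ :=
  -∑ i, ∑ j, P i j * (Real.log (P i j) - 1)

def couplings {n m : ℕ} (a : Fin n → ℝ) (b : Fin m → ℝ) :
    Set (Matrix (Fin n) (Fin m) ℝ) :=
  {P | (∀ i j, 0 ≤ P i j) ∧ (∀ i, ∑ j, P i j = a i) ∧ (∀ j, ∑ i, P i j = b j)}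

noncomputable def dotp {n m : ℕ} (P C : Matrix (Fin n) (Fin m) ℝ) : ℝ :=
  ∑ i, ∑ j, P i j * C i j

/-- The regularized optimal value `W^ε_C(a,b)`; for `ε = 0` this is the Kantorovich value. -/
noncomputable def W {n m : ℕ} (C : Matrix (Fin n) (Fin m) ℝ) (ε : ℝ)
    (a : Fin n → ℝ) (b : Fin m → ℝ) : ℝ :=
  sInf {v | ∃ P ∈ couplings a b, v = dotp P C - ε * entropy P}

lemma term_bound (x : ℝ) (hx0 : 0 ≤ x) (hx1 : x ≤ 1) :
    |x * (Real.log x - 1)| ≤ 2 := by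
  rcases eq_or_lt_of_le hx0 with h | h
  · simp [← h]
  · have hlog : Real.log x ≤ 0 := Real.log_nonpos h.le hx1
    have hub : x * (Real.log x - 1) ≤ 0 :=
      mul_nonpos_of_nonneg_of_nonpos hx0 (by linarith)
    have h1 : Real.log (1/x) ≤ 1/x - 1 := Real.log_le_sub_one_of_pos (by positivity)
    have h2 : Real.log (1/x) = -Real.log x := by rw [one_div, Real.log_inv]
    have h4 : -Real.log x ≤ 1/x - 1 := h2 ▸ h1
    have h5 : x * (-Real.log x) ≤ x * (1/x - 1) := mul_le_mul_of_nonneg_left h4 hx0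
    have h6 : x * (1/x - 1) = 1 - x := by field_simp
    rw [abs_le]
    constructor
    · nlinarith
    · linarith

theorem stmt3 {n m : ℕ} (a : Fin n → ℝ) (b : Fin m → ℝ)
    (ha : (∀ i, 0 ≤ a i) ∧ ∑ i, a i = 1) (hb : (∀ j, 0 ≤ b j) ∧ ∑ j, b j = 1)
    (C : Matrix (Fin n) (Fin m) ℝ) :
    Tendsto (fun ε => W C ε a b) (nhdsWithin 0 (Set.Ioi 0)) (nhds (W C 0 a b)) := by
  obtain ⟨ha0, ha1⟩ := ha
  obtain ⟨hb0, hb1⟩ := hb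
  -- product coupling
  have hKne : (fun i j => a i * b j) ∈ couplings a b := by
    refine ⟨fun i j => mul_nonneg (ha0 i) (hb0 j), fun i => ?_, fun j => ?_⟩
    · simp [← Finset.mul_sum, hb1]
    · simp [← Finset.sum_mul, ha1]
  have hPle : ∀ P ∈ couplings a b, ∀ i j, 0 ≤ P i j ∧ P i j ≤ 1 := by
    rintro P ⟨hP0, hPr, _⟩ i j
    refine ⟨hP0 i j, ?_⟩
    calc P i j ≤ ∑ j', P i j' :=
          Finset.single_le_sum (fun j' _ => hP0 i j') (Finset.mem_univ j)
      _ = a i := hPr i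
      _ ≤ ∑ i', a i' := Finset.single_le_sum (fun i' _ => ha0 i') (Finset.mem_univ i)
      _ = 1 := ha1
  set M : ℝ := 2 * n * m with hM
  have hM0 : 0 ≤ M := by positivity
  have hent : ∀ P ∈ couplings a b, |entropy P| ≤ M := by
    intro P hP
    have hb2 : |∑ i, ∑ j, P i j * (Real.log (P i j) - 1)| ≤ M := by
      calc |∑ i, ∑ j, P i j * (Real.log (P i j) - 1)|
          ≤ ∑ i, |∑ j, P i j * (Real.log (P i j) - 1)| := Finset.abs_sum_le_sum_abs _ _
        _ ≤ ∑ i : Fin n, ∑ j : Fin m, (2:ℝ) := by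
            apply Finset.sum_le_sum
            intro i _
            calc |∑ j, P i j * (Real.log (P i j) - 1)|
                ≤ ∑ j, |P i j * (Real.log (P i j) - 1)| := Finset.abs_sum_le_sum_abs _ _
              _ ≤ ∑ j : Fin m, (2:ℝ) := by
                  apply Finset.sum_le_sum
                  intro j _
                  exact term_bound _ (hPle P hP i j).1 (hPle P hP i j).2
        _ = M := by simp [hM]; ring
    simpa [entropy, abs_neg] using hb2
  set B : ℝ := ∑ i, ∑ j, |C i j| with hB
  have hdotp : ∀ P ∈ couplings a b, |dotp P C| ≤ B := by
    intro P hP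
    calc |dotp P C| ≤ ∑ i, |∑ j, P i j * C i j| := Finset.abs_sum_le_sum_abs _ _
      _ ≤ ∑ i, ∑ j, |C i j| := by
          apply Finset.sum_le_sum
          intro i _
          calc |∑ j, P i j * C i j| ≤ ∑ j, |P i j * C i j| := Finset.abs_sum_le_sum_abs _ _
            _ ≤ ∑ j, |C i j| := by
                apply Finset.sum_le_sum
                intro j _
                rw [abs_mul]
                calc |P i j| * |C i j| ≤ 1 * |C i j| := by
                      apply mul_le_mul_of_nonneg_right _ (abs_nonneg _)
                      rw [abs_of_nonneg (hPle P hP i j).1]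
                      exact (hPle P hP i j).2
                  _ = |C i j| := one_mul _
  -- nonempty and bddBelow for each ε
  have hSne : ∀ ε : ℝ, Set.Nonempty {v | ∃ P ∈ couplings a b, v = dotp P C - ε * entropy P} :=
    fun ε => ⟨_, _, hKne, rfl⟩
  have hSbdd : ∀ ε : ℝ, BddBelow {v | ∃ P ∈ couplings a b, v = dotp P C - ε * entropy P} := by
    intro ε
    refine ⟨-B - |ε| * M, ?_⟩
    rintro v ⟨P, hP, rfl⟩
    have h1 := hdotp P hP
    have h2 := hent P hP
    have h3 : |ε * entropy P| ≤ |ε| * M := by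
      rw [abs_mul]
      exact mul_le_mul_of_nonneg_left h2 (abs_nonneg ε)
    have := abs_le.mp h1
    have := abs_le.mp h3
    obtain ⟨hA,hA'⟩ := abs_le.mp h1
    obtain ⟨hC,hC'⟩ := abs_le.mp h3
    linarith
  have key : ∀ ε : ℝ, |W C ε a b - W C 0 a b| ≤ |ε| * M := by
    intro ε
    have h1 : W C ε a b ≤ W C 0 a b + |ε| * M := by
      rw [← sub_le_iff_le_add]
      apply le_csInf (hSne 0)
      rintro v ⟨P, hP, rfl⟩
      have hle : W C ε a b ≤ dotp P C - ε * entropy P := csInf_le (hSbdd ε) ⟨P, hP, rfl⟩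
      have h3 : |ε * entropy P| ≤ |ε| * M := by
        rw [abs_mul]; exact mul_le_mul_of_nonneg_left (hent P hP) (abs_nonneg ε)
      have := abs_le.mp h3
      simp only [zero_mul]
      linarith
    have h2 : W C 0 a b ≤ W C ε a b + |ε| * M := by
      rw [← sub_le_iff_le_add]
      apply le_csInf (hSne ε)
      rintro v ⟨P, hP, rfl⟩
      have hle : W C 0 a b ≤ dotp P C - 0 * entropy P := csInf_le (hSbdd 0) ⟨P, hP, rfl⟩
      have h3 : |ε * entropy P| ≤ |ε| * M := by
        rw [abs_mul]; exact mul_le_mul_of_nonneg_left (hent P hP) (abs_nonneg ε)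
      have := abs_le.mp h3
      simp only [zero_mul] at hle
      linarith
    rw [abs_le]
    constructor <;> linarith
  have hg : Tendsto (fun ε : ℝ => |ε| * M) (nhdsWithin 0 (Set.Ioi 0)) (nhds 0) := by
    have : Tendsto (fun ε : ℝ => |ε| * M) (nhds 0) (nhds (|(0:ℝ)| * M)) :=
      (continuous_abs.mul continuous_const).tendsto 0
    simpa using this.mono_left nhdsWithin_le_nhds
  have hdiff : Tendsto (fun ε => W C ε a b - W C 0 a b) (nhdsWithin 0 (Set.Ioi 0)) (nhds 0) := by
    apply squeeze_zero_norm (fun ε => key ε) hg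
  have := hdiff.add_const (W C 0 a b)
  simpa using this
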